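/- arXiv:1103.5723 — 4 statements merged into one kernel-verified Lean document; each statement's English description precedes it below -/
import Mathlib

section
/- Let R be a commutative ring, M an R-module, and let ω₀, ω₁, …, ω_n be elements of M. Then in the exterior algebra Λ_R M the alternating sum of the (n)-fold wedge products omitting one factor at a time equals a single product of differences: ∑_{i=0}^{n} (−1)^i · ι(ω₀) ∧ ⋯ ∧ \widehat{ι(ω_i)} ∧ ⋯ ∧ ι(ω_n) = ι(ω₁ − ω₀) ∧ ι(ω₂ − ω₀) ∧ ⋯ ∧ ι(ω_n − ω₀), where the hat denotes a deleted factor. -/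
open ExteriorAlgebra

section Aux
variable {R : Type*} [CommRing R] {M : Type*} [AddCommGroup M] [Module R M]

lemma aux_swap (x : M) : ∀ l : List M,
    ι R x * (l.map (ι R)).prod = (-1 : R) ^ l.length • ((l.map (ι R)).prod * ι R x)
  | [] => by simp
  | y :: l => by
    have h : ι R x * ι R y = -(ι R y * ι R x) :=
      eq_neg_of_add_eq_zero_left (ExteriorAlgebra.ι_add_mul_swap (R := R) x y)
    simp only [List.map_cons, List.prod_cons, List.length_cons]
    rw [← mul_assoc, h, neg_mul, mul_assoc, aux_swap x l, pow_succ, mul_smul,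
      mul_smul_comm, neg_one_smul, smul_neg, mul_assoc]

lemma aux_swap' (x : M) {m : ℕ} (f : Fin m → M) :
    ι R x * (List.ofFn fun j => ι R (f j)).prod
      = (-1 : R) ^ m • ((List.ofFn fun j => ι R (f j)).prod * ι R x) := by
  simpa [List.map_ofFn, Function.comp_def] using aux_swap x (List.ofFn f)
end Aux

/-- For elements `ω 0, …, ω n` of an `R`-module `M`, in the exterior
algebra `Λ_R M` the alternating sum of the `n`-fold wedge products omitting one factor
at a time equals the single wedge product of the differences `ω i - ω 0`. -/
theorem alternating_sum_wedge_eq_wedge_sub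
    (R : Type*) [CommRing R] (M : Type*) [AddCommGroup M] [Module R M]
    (n : ℕ) (ω : Fin (n + 1) → M) :
    ∑ i : Fin (n + 1), (-1 : R) ^ (i : ℕ) •
        (List.ofFn fun j : Fin n => ExteriorAlgebra.ι R (ω (i.succAbove j))).prod
      = (List.ofFn fun j : Fin n => ExteriorAlgebra.ι R (ω j.succ - ω 0)).prod := by
  induction n with
  | zero => simp
  | succ n ih =>
    set ω' : Fin (n + 1) → M := fun k => ω k.castSucc with hω'
    -- multiplying by the last factor fills in the last slot
    have key1 : ∀ i : Fin (n + 1),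
        (List.ofFn fun j : Fin n => ι R (ω' (i.succAbove j))).prod * ι R (ω (Fin.last n).succ)
          = (List.ofFn fun j : Fin (n + 1) => ι R (ω (i.castSucc.succAbove j))).prod := by
      intro i
      rw [List.ofFn_succ', List.prod_concat]
      congr 1
      · congr 1
        congr 1
        funext j
        rw [Fin.castSucc_succAbove_castSucc]
      · rw [Fin.succAbove_of_le_castSucc _ _ (by
          simpa [Fin.castSucc_le_castSucc_iff] using Fin.le_last i)]
    -- the terms with a repeated ω 0 vanish
    have key2 : ∀ i : Fin (n + 1), i ≠ 0 →
        (List.ofFn fun j : Fin n => ι R (ω' (i.succAbove j))).prod * ι R (ω 0) = 0 := by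
      intro i hi
      have hn : 0 < n := by
        rcases Nat.eq_zero_or_pos n with h | h
        · subst h; exact absurd (Fin.fin_one_eq_zero i) hi
        · exact h
      have hf : ω' (i.succAbove ⟨0, hn⟩) = ω 0 := by
        have h0 : i.succAbove ⟨0, hn⟩ = 0 := by
          rw [Fin.succAbove_of_castSucc_lt]
          · rfl
          · exact Fin.lt_iff_val_lt_val.mpr (Nat.pos_of_ne_zero (by simpa using Fin.val_ne_iff.mpr hi))
        rw [h0]
        simp [hω']
      have h1 : ι R (ω 0) * (List.ofFn fun j : Fin n => ι R (ω' (i.succAbove j))).prod = 0 := by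
        rw [← hf]
        exact ExteriorAlgebra.ι_mul_prod_list (fun j => ω' (i.succAbove j)) ⟨0, hn⟩
      have h2 := aux_swap' (R := R) (ω 0) (fun j : Fin n => ω' (i.succAbove j))
      rw [h1] at h2
      have h4 : ((-1 : R) ^ n) • (((-1 : R) ^ n) •
          ((List.ofFn fun j : Fin n => ι R (ω' (i.succAbove j))).prod * ι R (ω 0)))
          = (List.ofFn fun j : Fin n => ι R (ω' (i.succAbove j))).prod * ι R (ω 0) := by
        rw [smul_smul, ← pow_add, Even.neg_one_pow ⟨n, by ring⟩, one_smul]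
      rw [← h4, ← h2, smul_zero]
    -- the last term of the big sum
    have key3 : (List.ofFn fun j : Fin (n + 1) => ι R (ω ((Fin.last (n + 1)).succAbove j))).prod
        = ι R (ω 0) * (List.ofFn fun j : Fin n => ι R (ω' ((0 : Fin (n + 1)).succAbove j))).prod := by
      rw [List.ofFn_succ, List.prod_cons]
      simp [ω', Fin.succAbove_last]
    -- rewrite the right-hand side using the induction hypothesis
    have hstep : (List.ofFn fun j : Fin (n + 1) => ι R (ω j.succ - ω 0)).prod
        = (∑ i : Fin (n + 1), (-1 : R) ^ (i : ℕ) •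
            (List.ofFn fun j : Fin n => ι R (ω' (i.succAbove j))).prod)
          * (ι R (ω (Fin.last n).succ) - ι R (ω 0)) := by
      rw [List.ofFn_succ', List.prod_concat]
      have hfe : (fun j : Fin n => ι R (ω (Fin.castSucc j).succ - ω 0))
          = fun j : Fin n => ι R (ω' j.succ - ω' 0) := by
        funext j; rw [Fin.succ_castSucc]; rfl
      rw [hfe, ih ω', map_sub]
    have hsum2 : ∑ i : Fin (n + 1), (-1 : R) ^ (i : ℕ) •
          ((List.ofFn fun j : Fin n => ι R (ω' (i.succAbove j))).prod * ι R (ω 0))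
        = (List.ofFn fun j : Fin n => ι R (ω' ((0 : Fin (n + 1)).succAbove j))).prod
            * ι R (ω 0) := by
      rw [Finset.sum_eq_single_of_mem (0 : Fin (n + 1)) (Finset.mem_univ _)
        (fun i _ hi => by rw [key2 i hi, smul_zero])]
      simp
    have hodd : (-1 : R) ^ (n + 1 + n) = -1 := Odd.neg_one_pow ⟨n, by ring⟩
    rw [hstep, mul_sub, Finset.sum_mul, Finset.sum_mul]
    simp only [smul_mul_assoc]
    rw [hsum2]
    simp only [key1]
    rw [Fin.sum_univ_castSucc, Fin.val_last, key3, aux_swap' (R := R) (ω 0),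
      smul_smul, ← pow_add, hodd, neg_one_smul, sub_eq_add_neg]
    simp only [Fin.coe_castSucc]
end

section
/- Let R be a commutative ring, A a commutative R-algebra, M an A-module, d : A → M an R-linear derivation, and ∇ : A → M a connection relative to d. Then for any units s₀, s₁, …, s_n ∈ Aˣ one has, in the exterior algebra Λ_A M: ∑_{i=0}^{n} (−1)^i · s_i • (ι(∇s₀) ∧ ⋯ ∧ \widehat{ι(∇s_i)} ∧ ⋯ ∧ ι(∇s_n)) = (s₀·s₁·⋯·s_n) • (ι(dlog(s₁·s₀⁻¹)) ∧ ι(dlog(s₂·s₀⁻¹)) ∧ ⋯ ∧ ι(dlog(s_n·s₀⁻¹))). In particular the left-hand side does not involve ∇ except through d. -/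
section Helpers

variable {A M : Type*} [CommRing A] [AddCommGroup M] [Module A M]

private lemma my_anticomm (a b : M) :
    ExteriorAlgebra.ι A a * ExteriorAlgebra.ι A b
      = - (ExteriorAlgebra.ι A b * ExteriorAlgebra.ι A a) := by
  exact eq_neg_of_add_eq_zero_left (ExteriorAlgebra.ι_add_mul_swap a b)

private lemma my_smul_prod : ∀ (n : ℕ) (a : Fin n → A) (x : Fin n → ExteriorAlgebra A M),
    (List.ofFn fun j => a j • x j).prod
      = (∏ j, a j) • (List.ofFn fun j => x j).prod := by
  intro n
  induction n with
  | zero => simp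
  | succ n ih =>
    intro a x
    rw [List.ofFn_succ, List.ofFn_succ, List.prod_cons, List.prod_cons,
      ih (fun j => a j.succ) (fun j => x j.succ), Fin.prod_univ_succ,
      smul_mul_assoc, mul_smul_comm, smul_smul]

private lemma my_lemC : ∀ (n : ℕ) (v : M) (g : Fin n → M) (t : Fin n → A),
    ExteriorAlgebra.ι A v * (List.ofFn fun j => ExteriorAlgebra.ι A (g j + t j • v)).prod
      = ExteriorAlgebra.ι A v * (List.ofFn fun j => ExteriorAlgebra.ι A (g j)).prod := by
  intro n
  induction n with
  | zero => simp
  | succ n ih =>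
    intro v g t
    rw [List.ofFn_succ, List.ofFn_succ, List.prod_cons, List.prod_cons]
    have h1 : ExteriorAlgebra.ι A (g 0 + t 0 • v)
        = ExteriorAlgebra.ι A (g 0) + t 0 • ExteriorAlgebra.ι A v := by
      simp
    rw [h1, ← mul_assoc, ← mul_assoc, mul_add, mul_smul_comm,
      ExteriorAlgebra.ι_sq_zero, smul_zero, add_zero,
      my_anticomm v (g 0), neg_mul, neg_mul, mul_assoc, mul_assoc,
      ih v (fun j => g j.succ) (fun j => t j.succ)]

private lemma my_key (n : ℕ) (a b : M) (c : Fin n → M) :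
    ExteriorAlgebra.ι A (b - a)
        * (List.ofFn fun j => ExteriorAlgebra.ι A (c j - a)).prod
      = ExteriorAlgebra.ι A b * (List.ofFn fun j => ExteriorAlgebra.ι A (c j)).prod
        - ExteriorAlgebra.ι A a
            * (List.ofFn fun j => ExteriorAlgebra.ι A (c j - b)).prod := by
  have h1 : (List.ofFn fun j => ExteriorAlgebra.ι A (c j - a))
      = List.ofFn fun j => ExteriorAlgebra.ι A ((c j - b) + (1 : A) • (b - a)) := by
    congr 1; funext j; congr 1; rw [one_smul]; abel
  have h2 : (List.ofFn fun j => ExteriorAlgebra.ι A (c j - b))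
      = List.ofFn fun j => ExteriorAlgebra.ι A (c j + (-1 : A) • b) := by
    congr 1; funext j; congr 1; rw [neg_one_smul]; abel
  rw [h1, my_lemC n (b - a) (fun j => c j - b) (fun _ => (1 : A)), map_sub, sub_mul]
  congr 1
  rw [h2, my_lemC n b (fun j => c j) (fun _ => (-1 : A))]

private lemma my_lemD : ∀ (n : ℕ) (w : Fin (n + 1) → M),
    ∑ i : Fin (n + 1), (-1 : A) ^ (i : ℕ) •
        (List.ofFn fun j : Fin n => ExteriorAlgebra.ι A (w (i.succAbove j))).prod
      = (List.ofFn fun j : Fin n => ExteriorAlgebra.ι A (w j.succ - w 0)).prod := by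
  intro n
  induction n with
  | zero => simp
  | succ n ih =>
    intro w
    rw [Fin.sum_univ_succ]
    have hterm0 : (-1 : A) ^ (((0 : Fin (n+2))) : ℕ) •
        (List.ofFn fun j : Fin (n+1) =>
          ExteriorAlgebra.ι A (w ((0 : Fin (n+2)).succAbove j))).prod
        = (List.ofFn fun j : Fin (n+1) => ExteriorAlgebra.ι A (w j.succ)).prod := by
      simp [Fin.zero_succAbove]
    rw [hterm0]
    have hterms : ∀ i : Fin (n + 1),
        (-1 : A) ^ ((i.succ : Fin (n+2)) : ℕ) •
          (List.ofFn fun j : Fin (n+1) =>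
            ExteriorAlgebra.ι A (w (i.succ.succAbove j))).prod
        = -(ExteriorAlgebra.ι A (w 0) * ((-1 : A) ^ (i : ℕ) •
            (List.ofFn fun j : Fin n =>
              ExteriorAlgebra.ι A ((w ∘ Fin.succ) (i.succAbove j))).prod)) := by
      intro i
      rw [List.ofFn_succ]
      simp only [Fin.succ_succAbove_zero, Fin.succ_succAbove_succ, List.prod_cons,
        Fin.val_succ, pow_succ, Function.comp]
      rw [mul_smul_comm, mul_comm ((-1 : A) ^ (i : ℕ)) (-1 : A), mul_smul, neg_one_smul]
    rw [Finset.sum_congr rfl fun i _ => hterms i]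
    rw [Finset.sum_neg_distrib, ← Finset.mul_sum, ih (w ∘ Fin.succ)]
    rw [List.ofFn_succ (f := fun j : Fin (n+1) => ExteriorAlgebra.ι A (w j.succ - w 0)),
      List.prod_cons,
      List.ofFn_succ (f := fun j : Fin (n+1) => ExteriorAlgebra.ι A (w j.succ)),
      List.prod_cons]
    simp only [Function.comp, Fin.succ_zero_eq_one]
    rw [← sub_eq_add_neg]
    exact (my_key n (w 0) (w 1) (fun j => w j.succ.succ)).symm

end Helpers

section DlogHelpers

variable {R A M : Type*} [CommRing R] [CommRing A] [Algebra R A]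
  [AddCommGroup M] [Module R M] [Module A M]

private lemma my_dl_mul (d : Derivation R A M) (u v : Aˣ) :
    (↑(u * v)⁻¹ : A) • d ↑(u * v)
      = (↑u⁻¹ : A) • d ↑u + (↑v⁻¹ : A) • d ↑v := by
  simp only [mul_inv_rev, Units.val_mul, Derivation.leibniz, smul_add, smul_smul]
  have e1 : ((↑v⁻¹ : A) * ↑u⁻¹ * ↑u : A) = (↑v⁻¹ : A) := by
    rw [mul_assoc, Units.inv_mul, mul_one]
  have e2 : ((↑v⁻¹ : A) * ↑u⁻¹ * ↑v : A) = (↑u⁻¹ : A) := by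
    rw [mul_comm (↑v⁻¹ : A) (↑u⁻¹ : A), mul_assoc, Units.inv_mul, mul_one]
  rw [e1, e2, add_comm]

private lemma my_dl_inv (d : Derivation R A M) (u : Aˣ) :
    (↑(u⁻¹)⁻¹ : A) • d ↑u⁻¹ = -((↑u⁻¹ : A) • d ↑u) := by
  have h := my_dl_mul d u u⁻¹
  have h1 : u * u⁻¹ = 1 := mul_inv_cancel u
  rw [h1] at h
  simp only [inv_one, Units.val_one] at h
  have h2 : (1 : A) • d (1 : A) = 0 := by
    simp
  rw [h2] at h
  exact (eq_neg_of_add_eq_zero_right h.symm)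

end DlogHelpers

/-- Let `d : A → M` be an `R`-linear derivation and `nabla : A → M` a
connection relative to `d`. For units `s 0, …, s n : Aˣ`, in the exterior algebra `Λ_A M`:
`∑ i, (−1)^i • s i • (wedge of the ι (nabla (s j)) omitting j = i)`
`= (s 0 ⋯ s n) • ι (dlog (s 1 · (s 0)⁻¹)) ∧ ⋯ ∧ ι (dlog (s n · (s 0)⁻¹))`,
where `dlog u := u⁻¹ • d u`; in particular the left-hand side does not involve `nabla`
except through `d`. -/
theorem alternating_wedge_connection_eq_prod_smul_dlog
    (R A M : Type*) [CommRing R] [CommRing A] [Algebra R A]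
    [AddCommGroup M] [Module R M] [Module A M]
    (d : Derivation R A M) (nabla : A → M)
    (h_add : ∀ a b : A, nabla (a + b) = nabla a + nabla b)
    (h_leibniz : ∀ a b : A, nabla (a * b) = a • nabla b + b • d a)
    (n : ℕ) (s : Fin (n + 1) → Aˣ) :
    ∑ i : Fin (n + 1), (-1 : A) ^ (i : ℕ) • ((s i : A) •
        (List.ofFn fun j : Fin n =>
          ExteriorAlgebra.ι A (nabla (s (i.succAbove j) : A))).prod)
      = (∏ i : Fin (n + 1), (s i : A)) •
          (List.ofFn fun j : Fin n =>
            ExteriorAlgebra.ι A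
              ((↑(s j.succ * (s 0)⁻¹)⁻¹ : A) • d (↑(s j.succ * (s 0)⁻¹) : A))).prod := by
  set w : Fin (n + 1) → M := fun k => nabla 1 + (↑(s k)⁻¹ : A) • d (↑(s k) : A) with hw
  have hnabla : ∀ k : Fin (n + 1),
      ExteriorAlgebra.ι A (nabla (↑(s k) : A))
        = (↑(s k) : A) • ExteriorAlgebra.ι A (w k) := by
    intro k
    have h := h_leibniz (↑(s k) : A) 1
    rw [mul_one, one_smul] at h
    have h2 : (↑(s k) : A) • w k = nabla (↑(s k) : A) := by
      rw [hw]
      simp only [smul_add, smul_smul, Units.mul_inv, one_smul]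
      rw [h]
    rw [← h2, map_smul]
  have hdlog : ∀ j : Fin n,
      ((↑(s j.succ * (s 0)⁻¹)⁻¹ : A) • d (↑(s j.succ * (s 0)⁻¹) : A))
        = w j.succ - w 0 := by
    intro j
    rw [my_dl_mul d (s j.succ) ((s 0)⁻¹), my_dl_inv d (s 0), hw]
    beta_reduce
    abel
  have hterm : ∀ i : Fin (n + 1),
      (-1 : A) ^ (i : ℕ) • ((s i : A) •
          (List.ofFn fun j : Fin n =>
            ExteriorAlgebra.ι A (nabla (s (i.succAbove j) : A))).prod)
        = (∏ k : Fin (n + 1), (s k : A)) • ((-1 : A) ^ (i : ℕ) •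
            (List.ofFn fun j : Fin n => ExteriorAlgebra.ι A (w (i.succAbove j))).prod) := by
    intro i
    simp only [hnabla]
    rw [my_smul_prod n (fun j => (↑(s (i.succAbove j)) : A))
        (fun j => ExteriorAlgebra.ι A (w (i.succAbove j))),
      smul_smul, smul_smul, smul_smul]
    congr 1
    have hp : (↑(s i) : A) * ∏ j : Fin n, (↑(s (i.succAbove j)) : A)
        = ∏ k : Fin (n + 1), (↑(s k) : A) :=
      (Fin.prod_univ_succAbove (fun k => ((s k : A))) i).symm
    linear_combination ((-1 : A) ^ (i : ℕ)) * hp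
  rw [Finset.sum_congr rfl fun i _ => hterm i, ← Finset.smul_sum, my_lemD n w]
  simp only [hdlog]
end

section
/- Let R be a commutative ring, A a commutative R-algebra, M an A-module, and d : A → M an R-linear derivation. Let ∇₁ and ∇₂ both be connections relative to d. Then for any units s₀, s₁, …, s_n ∈ Aˣ the expressions ∑_{i=0}^{n} (−1)^i · s_i • (ι(∇s₀) ∧ ⋯ ∧ \widehat{ι(∇s_i)} ∧ ⋯ ∧ ι(∇s_n)) computed with ∇ = ∇₁ and with ∇ = ∇₂ are equal in Λ_A M: the expression is independent of the choice of connection relative to d. -/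
private lemma coe_succAbove {n : ℕ} (i : Fin (n+1)) (j : Fin n) :
    ((i.succAbove j : Fin (n+1)) : ℕ) = if (j:ℕ) < (i:ℕ) then (j:ℕ) else (j:ℕ)+1 := by
  rcases lt_or_ge ((j:ℕ)) ((i:ℕ)) with h | h
  · rw [Fin.succAbove_of_castSucc_lt _ _ (by simpa [Fin.lt_def] using h)]
    simp [h]
  · rw [Fin.succAbove_of_le_castSucc _ _ (by simpa [Fin.le_def] using h)]
    simp [Nat.not_lt.mpr h]

private lemma key_lemma {A M N : Type*} [CommRing A] [AddCommGroup M] [Module A M]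
    [AddCommGroup N] [Module A N] {n : ℕ} (F : M [⋀^Fin n]→ₗ[A] N) :
    ∀ (k : ℕ) (i b : Fin (n+1)) (w : Fin (n+1) → M), (b:ℕ) = (i:ℕ) + k + 1 → w i = w b →
    (-1:A)^(i:ℕ) • F (w ∘ i.succAbove) + (-1:A)^(b:ℕ) • F (w ∘ b.succAbove) = 0 := by
  intro k
  induction k with
  | zero =>
    intro i b w hb hw
    have hfun : w ∘ i.succAbove = w ∘ b.succAbove := by
      funext j
      show w (i.succAbove j) = w (b.succAbove j)
      rcases lt_trichotomy ((j:ℕ)) ((i:ℕ)) with h | h | h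
      · exact congrArg w (Fin.ext (by rw [coe_succAbove, coe_succAbove]; split_ifs <;> omega))
      · have e1 : i.succAbove j = b := Fin.ext (by rw [coe_succAbove]; split_ifs <;> omega)
        have e2 : b.succAbove j = i := Fin.ext (by rw [coe_succAbove]; split_ifs <;> omega)
        rw [e1, e2, hw]
      · exact congrArg w (Fin.ext (by rw [coe_succAbove, coe_succAbove]; split_ifs <;> omega))
    rw [hfun, hb]
    have : (-1:A)^((i:ℕ) + 0 + 1) = -((-1:A)^(i:ℕ)) := by ring
    rw [this, neg_smul, add_neg_cancel]
  | succ k IH =>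
    intro i b w hb hw
    have hbn : (b:ℕ) ≤ n := by omega
    set b' : Fin (n+1) := ⟨(b:ℕ) - 1, by omega⟩ with hb'
    have hb'v : (b':ℕ) = (i:ℕ) + k + 1 := by simp [hb']; omega
    have hib' : i ≠ b' := Fin.ne_of_val_ne (by omega)
    have hib : i ≠ b := Fin.ne_of_val_ne (by omega)
    have hb'b : b' ≠ b := Fin.ne_of_val_ne (by simp [hb']; omega)
    set w' : Fin (n+1) → M := w ∘ (Equiv.swap b' b) with hw'
    have hw'i : w' i = w i := by
      simp only [hw', Function.comp_apply, Equiv.swap_apply_of_ne_of_ne hib' hib]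
    have hw'b' : w' b' = w b := by
      simp only [hw', Function.comp_apply, Equiv.swap_apply_left]
    have IH2 := IH i b' w' hb'v (by rw [hw'i, hw, hw'b'])
    -- claim 1
    have claim1 : w' ∘ b'.succAbove = w ∘ b.succAbove := by
      funext j
      show w (Equiv.swap b' b (b'.succAbove j)) = w (b.succAbove j)
      rcases lt_trichotomy ((j:ℕ)) ((b':ℕ)) with h | h | h
      · rw [Equiv.swap_apply_of_ne_of_ne
          (Fin.ne_of_val_ne (by rw [coe_succAbove]; split_ifs <;> omega))
          (Fin.ne_of_val_ne (by rw [coe_succAbove]; split_ifs <;> omega))]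
        exact congrArg w (Fin.ext (by rw [coe_succAbove, coe_succAbove]; split_ifs <;> omega))
      · have e1 : b'.succAbove j = b := Fin.ext (by rw [coe_succAbove]; split_ifs <;> omega)
        have e2 : b.succAbove j = b' := Fin.ext (by rw [coe_succAbove]; split_ifs <;> omega)
        rw [e1, Equiv.swap_apply_right, e2]
      · rw [Equiv.swap_apply_of_ne_of_ne
          (Fin.ne_of_val_ne (by rw [coe_succAbove]; split_ifs <;> omega))
          (Fin.ne_of_val_ne (by rw [coe_succAbove]; split_ifs <;> omega))]
        exact congrArg w (Fin.ext (by rw [coe_succAbove, coe_succAbove]; split_ifs <;> omega))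
    -- claim 2
    have hn1 : 1 ≤ n := by omega
    set p : Fin n := ⟨(b':ℕ) - 1, by omega⟩ with hp
    set q : Fin n := ⟨(b:ℕ) - 1, by omega⟩ with hq
    have hpv : (p:ℕ) = (b:ℕ) - 1 - 1 := rfl
    have hqv : (q:ℕ) = (b:ℕ) - 1 := rfl
    have hb'vv : (b':ℕ) = (b:ℕ) - 1 := rfl
    have hpq : p ≠ q := Fin.ne_of_val_ne (by rw [hpv, hqv]; omega)
    have hσp : i.succAbove p = b' :=
      Fin.ext (by rw [coe_succAbove, hpv, hb'vv]; split_ifs <;> omega)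
    have hσq : i.succAbove q = b :=
      Fin.ext (by rw [coe_succAbove, hqv]; split_ifs <;> omega)
    have claim2 : w' ∘ i.succAbove = (w ∘ i.succAbove) ∘ (Equiv.swap p q) := by
      funext j
      show w (Equiv.swap b' b (i.succAbove j)) = w (i.succAbove (Equiv.swap p q j))
      rcases eq_or_ne j p with rfl | hjp
      · rw [hσp, Equiv.swap_apply_left, Equiv.swap_apply_left, hσq]
      · rcases eq_or_ne j q with rfl | hjq
        · rw [hσq, Equiv.swap_apply_right, Equiv.swap_apply_right, hσp]
        · rw [Equiv.swap_apply_of_ne_of_ne hjp hjq,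
            Equiv.swap_apply_of_ne_of_ne
              (fun h => hjp (Fin.succAbove_right_injective (h.trans hσp.symm)))
              (fun h => hjq (Fin.succAbove_right_injective (h.trans hσq.symm)))]
    have h1 : F (w' ∘ i.succAbove) = - F (w ∘ i.succAbove) := by
      rw [claim2]; exact AlternatingMap.map_swap F _ hpq
    have h2 : F (w' ∘ b'.succAbove) = F (w ∘ b.succAbove) := congrArg F claim1
    rw [h1, h2] at IH2
    have hbv : (-1:A)^((b:ℕ)) = -((-1:A)^((b':ℕ))) := by
      have : (b:ℕ) = (b':ℕ) + 1 := by simp [hb']; omega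
      rw [this, pow_succ]; ring
    rw [hbv, neg_smul]
    rw [smul_neg] at IH2
    have h4 : (-1:A)^((b':ℕ)) • F (w ∘ b.succAbove) = (-1:A)^((i:ℕ)) • F (w ∘ i.succAbove) := by
      have := eq_neg_of_add_eq_zero_right IH2
      rwa [neg_neg] at this
    rw [h4, add_neg_cancel]

private lemma expand_lemma {A M N : Type*} [CommRing A] [AddCommGroup M] [Module A M]
    [AddCommGroup N] [Module A N] {n : ℕ} (F : M [⋀^Fin n]→ₗ[A] N)
    (x : Fin n → M) (c : Fin n → A) (m : M) :
    F (fun j => x j + c j • m)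
      = F x + ∑ k : Fin n, c k • F (Function.update x k m) := by
  classical
  have hQ : ∀ (k : Fin n) (l : ℕ), l ≤ (k:ℕ) →
      F (fun (j : Fin n) => if (j:ℕ) < l then x j + c j • m else Function.update x k m j)
        = F (Function.update x k m) := by
    intro k l
    induction l with
    | zero => intro _; simp
    | succ l IH =>
      intro hl
      have hln : l < n := by omega
      set L : Fin n := ⟨l, hln⟩ with hL
      have hLk : L ≠ k := Fin.ne_of_val_ne (by simp [hL]; omega)
      have hfun : (fun (j : Fin n) => if (j:ℕ) < l + 1 then x j + c j • m else Function.update x k m j)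
          = Function.update (fun (j : Fin n) => if (j:ℕ) < l then x j + c j • m
              else Function.update x k m j) L (x L + c L • m) := by
        funext j
        rcases eq_or_ne j L with rfl | hj
        · simp [hL]
        · rw [Function.update_of_ne hj]
          have : (j:ℕ) ≠ l := fun h => hj (Fin.ext h)
          by_cases h : (j:ℕ) < l
          · rw [if_pos (by omega), if_pos h]
          · rw [if_neg (by omega), if_neg h]
      rw [hfun, AlternatingMap.map_update_add, AlternatingMap.map_update_smul]
      have e1 : Function.update (fun (j : Fin n) => if (j:ℕ) < l then x j + c j • m
          else Function.update x k m j) L (x L)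
          = fun (j : Fin n) => if (j:ℕ) < l then x j + c j • m else Function.update x k m j := by
        funext j
        rcases eq_or_ne j L with rfl | hj
        · rw [Function.update_self, if_neg (by simp [hL]), Function.update_of_ne hLk]
        · rw [Function.update_of_ne hj]
      have e2 : F (Function.update (fun (j : Fin n) => if (j:ℕ) < l then x j + c j • m
          else Function.update x k m j) L m) = 0 := by
        apply AlternatingMap.map_eq_zero_of_eq _ _ (i := L) (j := k) _ hLk
        rw [Function.update_self, Function.update_of_ne hLk.symm,
          if_neg (by omega), Function.update_self]
      rw [e1, e2, smul_zero, add_zero]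
      exact IH (by omega)
  have hP : ∀ l : ℕ, l ≤ n →
      F (fun (j : Fin n) => if (j:ℕ) < l then x j + c j • m else x j)
        = F x + ∑ k ∈ Finset.univ.filter (fun k : Fin n => (k:ℕ) < l),
            c k • F (Function.update x k m) := by
    intro l
    induction l with
    | zero => intro _; simp
    | succ l IH =>
      intro hl
      have hln : l < n := by omega
      set L : Fin n := ⟨l, hln⟩ with hL
      have hfun : (fun (j : Fin n) => if (j:ℕ) < l + 1 then x j + c j • m else x j)
          = Function.update (fun (j : Fin n) => if (j:ℕ) < l then x j + c j • m else x j)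
              L (x L + c L • m) := by
        funext j
        rcases eq_or_ne j L with rfl | hj
        · simp [hL]
        · rw [Function.update_of_ne hj]
          have : (j:ℕ) ≠ l := fun h => hj (Fin.ext h)
          by_cases h : (j:ℕ) < l
          · rw [if_pos (by omega), if_pos h]
          · rw [if_neg (by omega), if_neg h]
      have e1 : Function.update (fun (j : Fin n) => if (j:ℕ) < l then x j + c j • m else x j) L (x L)
          = fun (j : Fin n) => if (j:ℕ) < l then x j + c j • m else x j := by
        funext j
        rcases eq_or_ne j L with rfl | hj
        · rw [Function.update_self, if_neg (by simp [hL])]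
        · rw [Function.update_of_ne hj]
      have e2 : Function.update (fun (j : Fin n) => if (j:ℕ) < l then x j + c j • m else x j) L m
          = fun (j : Fin n) => if (j:ℕ) < l then x j + c j • m else Function.update x L m j := by
        funext j
        rcases eq_or_ne j L with rfl | hj
        · rw [Function.update_self, if_neg (by simp [hL]), Function.update_self]
        · rw [Function.update_of_ne hj]
          by_cases h : (j:ℕ) < l
          · rw [if_pos h, if_pos h]
          · rw [if_neg h, if_neg h, Function.update_of_ne hj]
      have hfilter : Finset.univ.filter (fun k : Fin n => (k:ℕ) < l + 1)
          = insert L (Finset.univ.filter (fun k : Fin n => (k:ℕ) < l)) := by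
        ext k
        simp only [Finset.mem_filter, Finset.mem_univ, true_and, Finset.mem_insert]
        constructor
        · intro h
          rcases eq_or_ne ((k:ℕ)) l with h' | h'
          · exact Or.inl (Fin.ext h')
          · exact Or.inr (by omega)
        · rintro (rfl | h)
          · simp [hL]
          · omega
      rw [hfun, AlternatingMap.map_update_add, AlternatingMap.map_update_smul, e1, e2,
        hQ L l (le_refl l), IH (by omega), hfilter,
        Finset.sum_insert (by simp [hL])]
      abel
  have h1 : (fun j => x j + c j • m) = fun (j : Fin n) => if (j:ℕ) < n then x j + c j • m else x j := by
    funext j; rw [if_pos j.isLt]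
  have h2 : Finset.univ.filter (fun k : Fin n => (k:ℕ) < n) = Finset.univ := by
    ext k; simp [k.isLt]
  rw [h1, hP n (le_refl n), h2]



/-- Let `d : A → M` be an `R`-linear derivation and let `nabla₁`, `nabla₂`
both be connections relative to `d`. Then for units `s 0, …, s n : Aˣ` the alternating
expressions `∑ i, (−1)^i • s i • (wedge of the ι (nabla (s j)) omitting j = i)` computed
with `nabla = nabla₁` and with `nabla = nabla₂` are equal in `Λ_A M`: the expression is
independent of the choice of connection relative to `d`. -/
theorem alternating_wedge_connection_independent
    (R A M : Type*) [CommRing R] [CommRing A] [Algebra R A]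
    [AddCommGroup M] [Module R M] [Module A M]
    (d : Derivation R A M) (nabla₁ nabla₂ : A → M)
    (h_add₁ : ∀ a b : A, nabla₁ (a + b) = nabla₁ a + nabla₁ b)
    (h_leibniz₁ : ∀ a b : A, nabla₁ (a * b) = a • nabla₁ b + b • d a)
    (h_add₂ : ∀ a b : A, nabla₂ (a + b) = nabla₂ a + nabla₂ b)
    (h_leibniz₂ : ∀ a b : A, nabla₂ (a * b) = a • nabla₂ b + b • d a)
    (n : ℕ) (s : Fin (n + 1) → Aˣ) :
    ∑ i : Fin (n + 1), (-1 : A) ^ (i : ℕ) • ((s i : A) •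
        (List.ofFn fun j : Fin n =>
          ExteriorAlgebra.ι A (nabla₁ (s (i.succAbove j) : A))).prod)
      = ∑ i : Fin (n + 1), (-1 : A) ^ (i : ℕ) • ((s i : A) •
          (List.ofFn fun j : Fin n =>
            ExteriorAlgebra.ι A (nabla₂ (s (i.succAbove j) : A))).prod) := by
  classical
  set m : M := nabla₁ 1 - nabla₂ 1 with hm
  have hδ : ∀ a : A, nabla₁ a = nabla₂ a + a • m := by
    intro a
    have h1 := h_leibniz₁ a 1
    have h2 := h_leibniz₂ a 1
    rw [mul_one, one_smul] at h1 h2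
    rw [h1, h2, hm, smul_sub]
    abel
  set X : Fin (n + 1) → M := fun b => nabla₂ ((s b : A)) with hX
  have hprod₂ : ∀ i : Fin (n + 1),
      (List.ofFn fun j : Fin n =>
        ExteriorAlgebra.ι A (nabla₂ (s (i.succAbove j) : A))).prod
        = ExteriorAlgebra.ιMulti A n (fun j : Fin n => X (i.succAbove j)) := by
    intro i
    rw [ExteriorAlgebra.ιMulti_apply]
  have hprod₁ : ∀ i : Fin (n + 1),
      (List.ofFn fun j : Fin n =>
        ExteriorAlgebra.ι A (nabla₁ (s (i.succAbove j) : A))).prod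
        = ExteriorAlgebra.ιMulti A n (fun j : Fin n => X (i.succAbove j))
          + ∑ k : Fin n, (s (i.succAbove k) : A) •
              ExteriorAlgebra.ιMulti A n
                (Function.update (fun j : Fin n => X (i.succAbove j)) k m) := by
    intro i
    rw [← ExteriorAlgebra.ιMulti_apply]
    have heq : (fun j : Fin n => nabla₁ (s (i.succAbove j) : A))
        = fun j : Fin n => X (i.succAbove j) + (s (i.succAbove j) : A) • m := by
      funext j
      rw [hδ]
    rw [heq]
    exact expand_lemma (ExteriorAlgebra.ιMulti A n) _ _ m
  simp only [hprod₁, hprod₂, smul_add, Finset.sum_add_distrib]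
  rw [add_eq_left]
  -- now show the correction terms vanish
  set T : Fin (n + 1) → Fin (n + 1) → ExteriorAlgebra A M := fun i b =>
    if i = b then 0 else
      ((-1 : A) ^ (i : ℕ) * (s i : A) * (s b : A)) •
        ExteriorAlgebra.ιMulti A n
          ((Function.update (Function.update X i m) b m) ∘ i.succAbove) with hT
  have hstepA : ∀ i : Fin (n + 1),
      (-1 : A) ^ (i : ℕ) • ((s i : A) • ∑ k : Fin n, (s (i.succAbove k) : A) •
          ExteriorAlgebra.ιMulti A n
            (Function.update (fun j : Fin n => X (i.succAbove j)) k m))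
        = ∑ k : Fin n, T i (i.succAbove k) := by
    intro i
    rw [Finset.smul_sum, Finset.smul_sum]
    refine Finset.sum_congr rfl fun k _ => ?_
    have hne : ¬ (i = i.succAbove k) := fun h => Fin.succAbove_ne i k h.symm
    have hupd : Function.update (fun j : Fin n => X (i.succAbove j)) k m
        = (Function.update (Function.update X i m) (i.succAbove k) m) ∘ i.succAbove := by
      funext j
      simp only [Function.comp_apply]
      rcases eq_or_ne j k with rfl | hj
      · rw [Function.update_self, Function.update_self]
      · rw [Function.update_of_ne hj,
          Function.update_of_ne (fun h => hj (Fin.succAbove_right_injective h)),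
          Function.update_of_ne (Fin.succAbove_ne i j)]
    rw [hupd]
    simp only [hT, if_neg hne]
    rw [smul_smul, smul_smul]
  simp only [hstepA]
  have hrow : ∀ i : Fin (n + 1),
      ∑ k : Fin n, T i (i.succAbove k) = ∑ b : Fin (n + 1), T i b := by
    intro i
    have h0 : T i i = 0 := by simp [hT]
    rw [Fin.sum_univ_succAbove (fun b => T i b) i, h0, zero_add]
  simp only [hrow]
  rw [← Finset.sum_product']
  have hTpairlt : ∀ i b : Fin (n + 1), (i : ℕ) < (b : ℕ) → T i b + T b i = 0 := by
    intro i b h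
    have hib : i ≠ b := Fin.ne_of_val_ne (Nat.ne_of_lt h)
    set w : Fin (n + 1) → M := Function.update (Function.update X i m) b m with hw
    have hwi : w i = m := by
      rw [hw, Function.update_of_ne hib, Function.update_self]
    have hwb : w b = m := by rw [hw, Function.update_self]
    have hw2 : Function.update (Function.update X b m) i m = w :=
      Function.update_comm hib.symm m m X
    have K := key_lemma (ExteriorAlgebra.ιMulti A n) ((b : ℕ) - (i : ℕ) - 1) i b w
      (by omega) (hwi.trans hwb.symm)
    simp only [hT, if_neg hib, if_neg hib.symm, hw2]
    rw [← hw]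
    rw [show ((-1 : A) ^ (i : ℕ) * (s i : A) * (s b : A))
        = ((s i : A) * (s b : A)) * (-1 : A) ^ (i : ℕ) from by ring,
      show ((-1 : A) ^ (b : ℕ) * (s b : A) * (s i : A))
        = ((s i : A) * (s b : A)) * (-1 : A) ^ (b : ℕ) from by ring,
      mul_smul ((s i : A) * (s b : A)) ((-1 : A) ^ (i : ℕ)),
      mul_smul ((s i : A) * (s b : A)) ((-1 : A) ^ (b : ℕ)),
      ← smul_add, K, smul_zero]
  have hTpair : ∀ p : Fin (n + 1) × Fin (n + 1), T p.1 p.2 + T p.2 p.1 = 0 := by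
    intro p
    rcases lt_trichotomy ((p.1 : ℕ)) ((p.2 : ℕ)) with h | h | h
    · exact hTpairlt p.1 p.2 h
    · have : p.1 = p.2 := Fin.ext h
      rw [this]
      simp [hT]
    · rw [add_comm]
      exact hTpairlt p.2 p.1 h
  refine Finset.sum_involution (fun p _ => (p.2, p.1)) (fun p _ => hTpair p)
    (fun p _ hfp hcontra => ?_) (fun p _ => Finset.mem_univ _) (fun p _ => rfl)
  apply hfp
  have h12 : p.2 = p.1 := congrArg Prod.fst hcontra
  rw [hT]
  simp [h12.symm]
end

section
/- Let R be a commutative ring, A a commutative R-algebra, M an A-module, d : A → M an R-linear derivation, and ∇ : A → M a connection relative to d. Then for any units s₀, s₁, …, s_n ∈ Aˣ and any unit t ∈ Aˣ, the expression ∑_{i=0}^{n} (−1)^i · s_i • (ι(∇s₀) ∧ ⋯ ∧ \widehat{ι(∇s_i)} ∧ ⋯ ∧ ι(∇s_n)) is homogeneous of degree n+1 under simultaneous rescaling: ∑_{i=0}^{n} (−1)^i · (t·s_i) • (ι(∇(t·s₀)) ∧ ⋯ ∧ \widehat{ι(∇(t·s_i))} ∧ ⋯ ∧ ι(∇(t·s_n)))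 = t^{n+1} • ∑_{i=0}^{n} (−1)^i · s_i • (ι(∇s₀) ∧ ⋯ ∧ \widehat{ι(∇s_i)} ∧ ⋯ ∧ ι(∇s_n)). -/
set_option maxHeartbeats 1000000

open ExteriorAlgebra

section Aux
variable {A M : Type*} [CommRing A] [AddCommGroup M] [Module A M]

private lemma prod_ofFn_smul (k : ℕ) (a : A) (g : Fin k → ExteriorAlgebra A M) :
    (List.ofFn fun j => a • g j).prod = a ^ k • (List.ofFn g).prod := by
  induction k with
  | zero => simp
  | succ k ih =>
    rw [List.ofFn_succ, List.ofFn_succ, List.prod_cons, List.prod_cons,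
      ih (fun j => g j.succ), smul_mul_assoc, mul_smul_comm, smul_smul, pow_succ']

private lemma key_expand (n : ℕ) (x : M) (c : Fin (n + 1) → A) (u : Fin (n + 1) → M) :
    (List.ofFn fun j : Fin (n + 1) => c j • ι A x + ι A (u j)).prod
      = (List.ofFn fun j : Fin (n + 1) => ι A (u j)).prod
        + ι A x * ∑ i : Fin (n + 1), (-1 : A) ^ (i : ℕ) • (c i •
            (List.ofFn fun j : Fin n => ι A (u (i.succAbove j))).prod) := by
  induction n with
  | zero =>
    simp [Fin.sum_univ_one, mul_smul_comm, add_comm]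
  | succ n ih =>
    have hswap : ∀ y : M, ι A y * ι A x = -(ι A x * ι A y) := fun y =>
      eq_neg_of_add_eq_zero_left (ι_add_mul_swap y x)
    rw [List.ofFn_succ, List.prod_cons]
    rw [show (fun j : Fin (n+1) => (fun j : Fin (n+2) => c j • ι A x + ι A (u j)) j.succ)
        = (fun j : Fin (n+1) => (c ∘ Fin.succ) j • ι A x + ι A ((u ∘ Fin.succ) j)) from rfl]
    rw [ih (c ∘ Fin.succ) (u ∘ Fin.succ)]
    set P := (List.ofFn fun j : Fin (n + 1) => ι A ((u ∘ Fin.succ) j)).prod with hP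
    set S := ∑ i : Fin (n + 1), (-1 : A) ^ (i : ℕ) • ((c ∘ Fin.succ) i •
        (List.ofFn fun j : Fin n => ι A ((u ∘ Fin.succ) (i.succAbove j))).prod) with hS
    have lhs_eq : (c 0 • ι A x + ι A (u 0)) * (P + ι A x * S)
        = ι A (u 0) * P + ι A x * (c 0 • P + -(ι A (u 0) * S)) := by
      rw [add_mul, mul_add, mul_add, smul_mul_assoc, smul_mul_assoc, ← mul_assoc,
        ι_sq_zero, zero_mul, smul_zero, add_zero, ← mul_assoc, hswap (u 0), neg_mul,
        mul_assoc, mul_add, mul_smul_comm, mul_neg]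
      abel
    rw [lhs_eq]
    congr 1
    · rw [List.ofFn_succ, List.prod_cons]; rfl
    congr 1
    rw [Fin.sum_univ_succ]
    congr 1
    · simp only [Fin.val_zero, pow_zero, one_smul, Fin.zero_succAbove, hP, Function.comp]
    · rw [hS, Finset.mul_sum, ← Finset.sum_neg_distrib]
      refine Finset.sum_congr rfl fun k _ => ?_
      rw [show ((List.ofFn fun j : Fin (n+1) => ι A (u ((Fin.succ k).succAbove j))).prod)
          = ι A (u 0) * (List.ofFn fun j : Fin n =>
              ι A ((u ∘ Fin.succ) (k.succAbove j))).prod by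
        rw [List.ofFn_succ, List.prod_cons, Fin.succ_succAbove_zero]
        simp only [Fin.succ_succAbove_succ, Function.comp]]
      rw [mul_smul_comm, mul_smul_comm, ← neg_smul, Fin.val_succ, pow_succ]
      congr 1
      ring
end Aux

/-- Let `d : A → M` be an `R`-linear derivation and `nabla : A → M` a
connection relative to `d`. For units `s 0, …, s n : Aˣ` and any unit `t : Aˣ`, the
alternating expression `∑ i, (−1)^i • s i • (wedge of the ι (nabla (s j)) omitting j = i)`
is homogeneous of degree `n + 1` under simultaneous rescaling of the `s i` by `t`. -/
theorem alternating_wedge_connection_homogeneous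
    (R A M : Type*) [CommRing R] [CommRing A] [Algebra R A]
    [AddCommGroup M] [Module R M] [Module A M]
    (d : Derivation R A M) (nabla : A → M)
    (h_add : ∀ a b : A, nabla (a + b) = nabla a + nabla b)
    (h_leibniz : ∀ a b : A, nabla (a * b) = a • nabla b + b • d a)
    (n : ℕ) (s : Fin (n + 1) → Aˣ) (t : Aˣ) :
    ∑ i : Fin (n + 1), (-1 : A) ^ (i : ℕ) • (((t : A) * (s i : A)) •
        (List.ofFn fun j : Fin n =>
          ExteriorAlgebra.ι A (nabla ((t : A) * (s (i.succAbove j) : A)))).prod)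
      = (t : A) ^ (n + 1) •
          ∑ i : Fin (n + 1), (-1 : A) ^ (i : ℕ) • ((s i : A) •
            (List.ofFn fun j : Fin n =>
              ExteriorAlgebra.ι A (nabla (s (i.succAbove j) : A))).prod) := by
  have ht : (t : A) * (↑t⁻¹ : A) = 1 := t.mul_inv
  set w : M := d ↑t with hw
  set x₀ : A × M := (1, 0) with hx₀
  set x₁ : A × M := (1, (↑t⁻¹ : A) • w) with hx₁
  set xw : A × M := (0, w) with hxw
  set u : Fin (n+1) → A × M := fun i => (0, nabla ↑(s i)) with hu
  set u' : Fin (n+1) → A × M := fun i => (0, nabla ((t : A) * ↑(s i))) with hu'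
  set Φ : ExteriorAlgebra A M →ₐ[A] ExteriorAlgebra A (A × M) :=
    ExteriorAlgebra.map (LinearMap.inr A A M) with hΦ
  -- step A
  have hA : ∀ j : Fin (n+1), ((t : A) * (s j : A)) • ι A x₀ + ι A (u' j)
      = (t : A) • ((s j : A) • ι A x₁ + ι A (u j)) := by
    intro j
    rw [← map_smul, ← map_smul, ← map_add, ← map_add, ← map_smul]
    congr 1
    rw [hu', hu, hx₀, hx₁]
    beta_reduce
    rw [h_leibniz, ← hw]
    simp only [Prod.smul_mk, Prod.mk_add_mk, smul_eq_mul, smul_zero, mul_zero, mul_one,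
      add_zero, zero_add, Prod.mk.injEq]
    refine ⟨trivial, ?_⟩
    match_scalars <;> first
      | ring1
      | linear_combination (↑(s j) : A) * ht
      | linear_combination (-(↑(s j) : A)) * ht
      | linear_combination ((2 : A) * ↑(s j)) * ht
      | linear_combination (-(2 : A) * ↑(s j)) * ht
  have hA' : ∀ j : Fin (n+1), ι A (u' j)
      = (t : A) • (((s j : A) * (↑t⁻¹ : A)) • ι A xw + ι A (u j)) := by
    intro j
    rw [← map_smul, ← map_add, ← map_smul]
    congr 1
    rw [hu', hu, hxw]
    beta_reduce
    rw [h_leibniz, ← hw]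
    simp only [Prod.smul_mk, Prod.mk_add_mk, smul_eq_mul, smul_zero, mul_zero, mul_one,
      add_zero, zero_add, Prod.mk.injEq, true_and]
    match_scalars <;> first
      | ring1
      | linear_combination (↑(s j) : A) * ht
      | linear_combination (-(↑(s j) : A)) * ht
      | linear_combination ((2 : A) * ↑(s j)) * ht
      | linear_combination (-(2 : A) * ↑(s j)) * ht
  set P := (List.ofFn fun j : Fin (n+1) => ι A (u j)).prod with hP
  set Sg := ∑ i : Fin (n + 1), (-1 : A) ^ (i : ℕ) • ((s i : A) •
      (List.ofFn fun j : Fin n => ι A (u (i.succAbove j))).prod) with hSg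
  set Sum' := ∑ i : Fin (n + 1), (-1 : A) ^ (i : ℕ) • (((t : A) * (s i : A)) •
      (List.ofFn fun j : Fin n => ι A (u' (i.succAbove j))).prod) with hSum'
  -- E1 + E2 + E3 combined
  have E1 : (List.ofFn fun j : Fin (n+1) => ((t : A) * (s j : A)) • ι A x₀ + ι A (u' j)).prod
      = (t : A) ^ (n+1) • (List.ofFn fun j : Fin (n+1) =>
          (s j : A) • ι A x₁ + ι A (u j)).prod := by
    rw [show (fun j : Fin (n+1) => ((t : A) * (s j : A)) • ι A x₀ + ι A (u' j))
        = (fun j : Fin (n+1) => (t : A) • ((s j : A) • ι A x₁ + ι A (u j))) from funext hA,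
      prod_ofFn_smul]
  have E2 := key_expand n x₀ (fun j => (t : A) * (s j : A)) u'
  have E3 := key_expand n x₁ (fun j => (s j : A)) u
  -- E4
  have hSg2 : ∑ i : Fin (n + 1), (-1 : A) ^ (i : ℕ) • (((s i : A) * (↑t⁻¹ : A)) •
      (List.ofFn fun j : Fin n => ι A (u (i.succAbove j))).prod) = (↑t⁻¹ : A) • Sg := by
    rw [hSg, Finset.smul_sum]
    refine Finset.sum_congr rfl fun i _ => ?_
    simp only [smul_smul]
    congr 1
    ring
  have E4 : (List.ofFn fun j : Fin (n+1) => ι A (u' j)).prod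
      = (t : A) ^ (n+1) • P + (t : A) ^ n • (ι A xw * Sg) := by
    rw [show (fun j : Fin (n+1) => ι A (u' j)) = (fun j : Fin (n+1) =>
        (t : A) • (((s j : A) * (↑t⁻¹ : A)) • ι A xw + ι A (u j))) from funext hA',
      prod_ofFn_smul, key_expand n xw (fun j => (s j : A) * (↑t⁻¹ : A)) u, hSg2,
      smul_add, ← hP, mul_smul_comm, smul_smul]
    congr 2
    rw [pow_succ, mul_assoc, ht, mul_one]
  -- E5
  have E5 : ι A x₁ = ι A x₀ + (↑t⁻¹ : A) • ι A xw := by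
    rw [← map_smul, ← map_add]
    congr 1
    rw [hx₁, hx₀, hxw, Prod.smul_mk, Prod.mk_add_mk, smul_zero, add_zero, zero_add]
  -- main cancellation
  have hmain : ι A x₀ * Sum' = ι A x₀ * ((t : A) ^ (n+1) • Sg) := by
    have comb : (List.ofFn fun j : Fin (n+1) => ι A (u' j)).prod + ι A x₀ * Sum'
        = (t : A) ^ (n+1) • (P + ι A x₁ * Sg) := by
      rw [hSum', hSg, hP, ← E2, E1, E3]
    rw [E4, E5, add_mul, smul_add, smul_add, smul_mul_assoc, smul_smul] at comb
    have hpow : (t : A) ^ (n+1) * (↑t⁻¹ : A) = (t : A) ^ n := by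
      rw [pow_succ, mul_assoc, ht, mul_one]
    rw [hpow] at comb
    rw [mul_smul_comm]
    abel_nf at comb
    exact add_left_cancel (add_left_cancel comb)

  -- transport via Φ
  have hΦL : Φ (∑ i : Fin (n + 1), (-1 : A) ^ (i : ℕ) • (((t : A) * (s i : A)) •
      (List.ofFn fun j : Fin n =>
        ExteriorAlgebra.ι A (nabla ((t : A) * (s (i.succAbove j) : A)))).prod)) = Sum' := by
    rw [hSum', map_sum]
    refine Finset.sum_congr rfl fun i _ => ?_
    rw [map_smul, map_smul, map_list_prod, List.map_ofFn]
    simp only [Function.comp_def, hΦ, ExteriorAlgebra.map_apply_ι, LinearMap.inr_apply, hu']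
  have hΦR : Φ (∑ i : Fin (n + 1), (-1 : A) ^ (i : ℕ) • ((s i : A) •
      (List.ofFn fun j : Fin n =>
        ExteriorAlgebra.ι A (nabla (s (i.succAbove j) : A))).prod)) = Sg := by
    rw [hSg, map_sum]
    refine Finset.sum_congr rfl fun i _ => ?_
    rw [map_smul, map_smul, map_list_prod, List.map_ofFn]
    simp only [Function.comp_def, hΦ, ExteriorAlgebra.map_apply_ι, LinearMap.inr_apply, hu]
  -- retraction
  have hcomp : ∀ z : ExteriorAlgebra A M,
      ExteriorAlgebra.map (LinearMap.snd A A M) (Φ z) = z := by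
    intro z
    have hcomp0 : (ExteriorAlgebra.map (LinearMap.snd A A M)).comp
        (ExteriorAlgebra.map (LinearMap.inr A A M)) = AlgHom.id A (ExteriorAlgebra A M) := by
      rw [ExteriorAlgebra.map_comp_map, LinearMap.snd_comp_inr, ExteriorAlgebra.map_id]
    rw [hΦ]
    exact AlgHom.congr_fun hcomp0 z
  have hG : ∀ z : ExteriorAlgebra A M,
      ExteriorAlgebra.map (LinearMap.snd A A M)
        ((CliffordAlgebra.contractLeft (Q := (0 : QuadraticForm A (A × M)))
          (LinearMap.fst A A M)) (ι A x₀ * Φ z)) = z := by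
    intro z
    rw [CliffordAlgebra.contractLeft_ι_mul,
      show LinearMap.fst A A M x₀ = 1 from (by rw [hx₀]; rfl), one_smul, map_sub, hcomp,
      map_mul, ExteriorAlgebra.map_apply_ι,
      show LinearMap.snd A A M x₀ = 0 from (by rw [hx₀]; rfl), map_zero, zero_mul, sub_zero]
  calc
    ∑ i : Fin (n + 1), (-1 : A) ^ (i : ℕ) • (((t : A) * (s i : A)) •
        (List.ofFn fun j : Fin n =>
          ExteriorAlgebra.ι A (nabla ((t : A) * (s (i.succAbove j) : A)))).prod)
      = ExteriorAlgebra.map (LinearMap.snd A A M)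
          ((CliffordAlgebra.contractLeft (Q := (0 : QuadraticForm A (A × M)))
            (LinearMap.fst A A M)) (ι A x₀ * Φ (∑ i : Fin (n + 1), (-1 : A) ^ (i : ℕ) •
              (((t : A) * (s i : A)) • (List.ofFn fun j : Fin n =>
                ExteriorAlgebra.ι A (nabla ((t : A) * (s (i.succAbove j) : A)))).prod)))) :=
        (hG _).symm
    _ = ExteriorAlgebra.map (LinearMap.snd A A M)
          ((CliffordAlgebra.contractLeft (Q := (0 : QuadraticForm A (A × M)))
            (LinearMap.fst A A M)) (ι A x₀ * Φ ((t : A) ^ (n + 1) •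
              ∑ i : Fin (n + 1), (-1 : A) ^ (i : ℕ) • ((s i : A) •
                (List.ofFn fun j : Fin n =>
                  ExteriorAlgebra.ι A (nabla (s (i.succAbove j) : A))).prod)))) := by
        rw [hΦL, map_smul, hΦR, hmain]
    _ = (t : A) ^ (n + 1) •
          ∑ i : Fin (n + 1), (-1 : A) ^ (i : ℕ) • ((s i : A) •
            (List.ofFn fun j : Fin n =>
              ExteriorAlgebra.ι A (nabla (s (i.succAbove j) : A))).prod) := hG _
end
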